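/- (Bounded-error sufficient decrease, key step of Theorem 5.) Let g : ℝⁿ → ℝ ∪ {+∞} be proper, convex and lower semicontinuous, let S : ℝⁿ → ℝ be differentiable and L-smooth on dom g, and let η ∈ (0, 1/(L+1)), δ > 0, σ > 0, w ≥ 1. Let y ∈ dom g and G ∈ ℝⁿ satisfy ‖G − ∇S(y)‖ ≤ σ/w and ‖P_η^g(y; G)‖ ≥ δ/w, and set y⁺ = prox_{ηg}(y − η G). Then S(y) + g(y) − S(y⁺) − g(y⁺) ≥ ((1 − η(L+1))·η·δ² − σ²)/(2w²). -/

import Mathlib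

noncomputable section

open Finset MeasureTheory
open scoped RealInnerProductSpace

/-- `g : ℝⁿ → ℝ ∪ {+∞}` is proper, convex and lower semicontinuous. -/
def ProperConvexLsc {n : ℕ} (g : EuclideanSpace ℝ (Fin n) → WithTop ℝ) : Prop :=
  (∃ x, g x ≠ ⊤) ∧ LowerSemicontinuous g ∧
    ∀ x y : EuclideanSpace ℝ (Fin n), ∀ a b : ℝ, 0 ≤ a → 0 ≤ b → a + b = 1 →
      g (a • x + b • y) ≤ (a : WithTop ℝ) * g x + (b : WithTop ℝ) * g y

/-- `p` is a minimizer of `z ↦ η·g(z) + ½‖u − z‖²`. -/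
def IsProxPt {n : ℕ} (g : EuclideanSpace ℝ (Fin n) → WithTop ℝ) (η : ℝ)
    (u p : EuclideanSpace ℝ (Fin n)) : Prop :=
  ∀ z : EuclideanSpace ℝ (Fin n),
    (η : WithTop ℝ) * g p + ((1 / 2 * ‖u - p‖ ^ 2 : ℝ) : WithTop ℝ) ≤
      (η : WithTop ℝ) * g z + ((1 / 2 * ‖u - z‖ ^ 2 : ℝ) : WithTop ℝ)

/-- `prox` is the proximal operator of `ηg`: `prox u` is the unique minimizer of
`z ↦ η·g(z) + ½‖u − z‖²`. -/
def IsProxFun {n : ℕ} (g : EuclideanSpace ℝ (Fin n) → WithTop ℝ) (η : ℝ)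
    (prox : EuclideanSpace ℝ (Fin n) → EuclideanSpace ℝ (Fin n)) : Prop :=
  ∀ u, IsProxPt g η u (prox u) ∧ ∀ q, IsProxPt g η u q → q = prox u

/-- The prox-grad residual `P_η^g(x; d) = (x − prox_{ηg}(x − η d))/η`. -/
def proxRes {n : ℕ} (prox : EuclideanSpace ℝ (Fin n) → EuclideanSpace ℝ (Fin n)) (η : ℝ)
    (x d : EuclideanSpace ℝ (Fin n)) : EuclideanSpace ℝ (Fin n) :=
  η⁻¹ • (x - prox (x - η • d))

/-- Descent lemma: quadratic upper bound from a Lipschitz bound on the gradient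
along the segment from `a` to `b`. -/
lemma descent_lemma' {E : Type*} [NormedAddCommGroup E] [InnerProductSpace ℝ E]
    [CompleteSpace E] (S : E → ℝ) (S' : E → E)
    (hgrad : ∀ x, HasGradientAt S (S' x) x) (L : ℝ) (a b : E)
    (hlip : ∀ t ∈ Set.Icc (0:ℝ) 1, ‖S' (a + t • (b - a)) - S' a‖ ≤ L * (t * ‖b - a‖)) :
    S b ≤ S a + ⟪S' a, b - a⟫ + L / 2 * ‖b - a‖ ^ 2 := by
  set φ : ℝ → ℝ := fun t => S (a + t • (b - a)) - t * ⟪S' a, b - a⟫ - L * t ^ 2 / 2 * ‖b - a‖ ^ 2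
    with hφ
  have hc : ∀ t : ℝ, HasDerivAt (fun s : ℝ => a + s • (b - a)) (b - a) t := by
    intro t
    simpa using ((hasDerivAt_id t).smul_const (b - a)).const_add a
  have hder : ∀ t : ℝ,
      HasDerivAt φ (⟪S' (a + t • (b - a)), b - a⟫ - ⟪S' a, b - a⟫ - L * t * ‖b - a‖ ^ 2) t := by
    intro t
    have h1 : HasDerivAt (fun s : ℝ => S (a + s • (b - a)))
        ((InnerProductSpace.toDual ℝ E (S' (a + t • (b - a)))) (b - a)) t :=
      ((hgrad (a + t • (b - a))).hasFDerivAt.comp_hasDerivAt t (hc t))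
    rw [InnerProductSpace.toDual_apply_apply] at h1
    have h2 : HasDerivAt (fun s : ℝ => s * ⟪S' a, b - a⟫) ⟪S' a, b - a⟫ t := by
      simpa using (hasDerivAt_id t).mul_const ⟪S' a, b - a⟫
    have h3 : HasDerivAt (fun s : ℝ => L * s ^ 2 / 2 * ‖b - a‖ ^ 2)
        (L * t * ‖b - a‖ ^ 2) t := by
      have := (((hasDerivAt_pow 2 t).const_mul L).div_const 2).mul_const (‖b - a‖ ^ 2)
      exact this.congr_deriv (by ring)
    exact (h1.sub h2).sub h3
  have hanti : AntitoneOn φ (Set.Icc 0 1) := by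
    apply antitoneOn_of_deriv_nonpos (convex_Icc 0 1)
    · exact fun t _ => ((hder t).continuousAt).continuousWithinAt
    · exact fun t _ => ((hder t).differentiableAt).differentiableWithinAt
    · intro t ht
      rw [interior_Icc] at ht
      rw [(hder t).deriv]
      have hb : ⟪S' (a + t • (b - a)) - S' a, b - a⟫ ≤ L * (t * ‖b - a‖) * ‖b - a‖ :=
        le_trans (real_inner_le_norm _ _)
          (mul_le_mul_of_nonneg_right (hlip t ⟨le_of_lt ht.1, le_of_lt ht.2⟩) (norm_nonneg _))
      rw [inner_sub_left] at hb
      nlinarith [hb]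
  have h01 := hanti (Set.mem_Icc.mpr ⟨le_refl 0, zero_le_one⟩)
    (Set.mem_Icc.mpr ⟨zero_le_one, le_refl 1⟩) zero_le_one
  simp only [hφ, zero_smul, add_zero, one_smul, zero_mul, zero_pow, mul_zero, zero_div,
    sub_zero, one_pow, mul_one, add_sub_cancel] at h01
  linarith

theorem stmt12 {n : ℕ} (g : EuclideanSpace ℝ (Fin n) → WithTop ℝ)
    (hg : ProperConvexLsc g)
    (prox : EuclideanSpace ℝ (Fin n) → EuclideanSpace ℝ (Fin n))
    (L η δ σ w : ℝ) (hL : 0 < L) (hη : 0 < η) (hη' : η < 1 / (L + 1))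
    (hδ : 0 < δ) (hσ : 0 < σ) (hw : 1 ≤ w)
    (hprox : IsProxFun g η prox)
    (S : EuclideanSpace ℝ (Fin n) → ℝ) (S' : EuclideanSpace ℝ (Fin n) → EuclideanSpace ℝ (Fin n))
    (hgrad : ∀ x, HasGradientAt S (S' x) x)
    (hsmooth : ∀ x y : EuclideanSpace ℝ (Fin n), g x ≠ ⊤ → g y ≠ ⊤ →
      ‖S' x - S' y‖ ≤ L * ‖x - y‖)
    (y G yp : EuclideanSpace ℝ (Fin n)) (hy : g y ≠ ⊤)
    (herr : ‖G - S' y‖ ≤ σ / w) (hres : δ / w ≤ ‖proxRes prox η y G‖)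
    (hyp : yp = prox (y - η • G)) :
    ((S yp : ℝ) : WithTop ℝ) + g yp +
        ((((1 - η * (L + 1)) * η * δ ^ 2 - σ ^ 2) / (2 * w ^ 2) : ℝ) : WithTop ℝ) ≤
      ((S y : ℝ) : WithTop ℝ) + g y := by
  have hηne : η ≠ 0 := ne_of_gt hη
  have hw0 : (0:ℝ) < w := lt_of_lt_of_le one_pos hw
  obtain ⟨gy, hgy⟩ := WithTop.ne_top_iff_exists.mp hy
  set p : EuclideanSpace ℝ (Fin n) := proxRes prox η y G with hpdef
  have hyyp : y - yp = η • p := by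
    rw [hpdef, proxRes, ← hyp, smul_smul, mul_inv_cancel₀ hηne, one_smul]
  -- prox inequality at z = y
  have hpp := (hprox (y - η • G)).1 y
  rw [← hyp] at hpp
  -- g yp is finite
  have hfin : g yp ≠ ⊤ := by
    intro htop
    rw [htop, ← hgy, WithTop.mul_top (by exact_mod_cast hηne), top_add,
      ← WithTop.coe_mul, ← WithTop.coe_add, top_le_iff] at hpp
    exact WithTop.coe_ne_top hpp
  obtain ⟨gyp, hgyp⟩ := WithTop.ne_top_iff_exists.mp hfin
  rw [← hgy, ← hgyp, ← WithTop.coe_mul, ← WithTop.coe_mul, ← WithTop.coe_add,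
    ← WithTop.coe_add, WithTop.coe_le_coe] at hpp
  -- norm computations
  have hn1 : ‖(y - η • G) - y‖ ^ 2 = η ^ 2 * ‖G‖ ^ 2 := by
    have h : (y - η • G) - y = -(η • G) := by abel
    rw [h, norm_neg, norm_smul, Real.norm_eq_abs, abs_of_pos hη, mul_pow]
  have hn2 : ‖(y - η • G) - yp‖ ^ 2 = η ^ 2 * ‖p - G‖ ^ 2 := by
    have h : (y - η • G) - yp = η • (p - G) := by
      rw [smul_sub, ← hyyp]; abel
    rw [h, norm_smul, Real.norm_eq_abs, abs_of_pos hη, mul_pow]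
  rw [hn1, hn2] at hpp
  have hsq : η ^ 2 * ‖p - G‖ ^ 2 = η ^ 2 * (‖p‖ ^ 2 - 2 * ⟪G, p⟫ + ‖G‖ ^ 2) := by
    rw [norm_sub_sq_real, real_inner_comm]
  -- g-decrease
  have Hg : gyp ≤ gy + η * ⟪G, p⟫ - η / 2 * ‖p‖ ^ 2 := by
    have Hg2 : η * gyp ≤ η * (gy + η * ⟪G, p⟫ - η / 2 * ‖p‖ ^ 2) := by
      have hrhs : η * (gy + η * ⟪G, p⟫ - η / 2 * ‖p‖ ^ 2)
          = η * gy + η ^ 2 * ⟪G, p⟫ - η ^ 2 / 2 * ‖p‖ ^ 2 := by ring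
      rw [hrhs]
      linarith [hpp, hsq]
    exact le_of_mul_le_mul_left Hg2 hη
  -- domain convexity
  have hdom : ∀ t ∈ Set.Icc (0:ℝ) 1, g (y + t • (yp - y)) ≠ ⊤ := by
    intro t ht
    have hconv := hg.2.2 y yp (1 - t) t (by linarith [ht.2]) ht.1 (by ring)
    have heqpt : (1 - t) • y + t • yp = y + t • (yp - y) := by
      rw [smul_sub, sub_smul, one_smul]; abel
    rw [heqpt, ← hgy, ← hgyp, ← WithTop.coe_mul, ← WithTop.coe_mul, ← WithTop.coe_add] at hconv
    exact ne_top_of_le_ne_top WithTop.coe_ne_top hconv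
  -- Lipschitz along segment
  have hlip : ∀ t ∈ Set.Icc (0:ℝ) 1,
      ‖S' (y + t • (yp - y)) - S' y‖ ≤ L * (t * ‖yp - y‖) := by
    intro t ht
    have h := hsmooth (y + t • (yp - y)) y (hdom t ht) hy
    rw [add_sub_cancel_left, norm_smul, Real.norm_eq_abs, abs_of_nonneg ht.1] at h
    exact h
  have HS := descent_lemma' S S' hgrad L y yp hlip
  have hysub : yp - y = -(η • p) := by rw [← hyyp]; abel
  rw [hysub, inner_neg_right, real_inner_smul_right, norm_neg, norm_smul,
    Real.norm_eq_abs, abs_of_pos hη, mul_pow] at HS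
  -- goal to reals
  rw [← hgy, ← hgyp, ← WithTop.coe_add, ← WithTop.coe_add, ← WithTop.coe_add,
    WithTop.coe_le_coe]
  -- final arithmetic
  have hcauchy : ⟪G - S' y, p⟫ ≤ ‖G - S' y‖ * ‖p‖ := real_inner_le_norm _ _
  rw [inner_sub_left] at hcauchy
  have hC : 0 ≤ 1 - η * (L + 1) := by
    have hL1 : (0:ℝ) < L + 1 := by linarith
    rw [lt_div_iff₀ hL1] at hη'
    linarith
  have hmul := mul_le_mul_of_nonneg_left hcauchy (le_of_lt hη)
  have hamgm : η * (‖G - S' y‖ * ‖p‖) ≤ ‖G - S' y‖ ^ 2 / 2 + η ^ 2 * ‖p‖ ^ 2 / 2 := by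
    nlinarith [sq_nonneg (‖G - S' y‖ - η * ‖p‖)]
  have key : η * (1 - η * (L + 1)) / 2 * ‖p‖ ^ 2 - ‖G - S' y‖ ^ 2 / 2
      ≤ S y + gy - S yp - gyp := by
    have hexp : η * (1 - η * (L + 1)) / 2 * ‖p‖ ^ 2
        = η / 2 * ‖p‖ ^ 2 - L / 2 * (η ^ 2 * ‖p‖ ^ 2) - η ^ 2 * ‖p‖ ^ 2 / 2 := by ring
    rw [hexp]
    linarith [Hg, HS, hmul, hamgm]
  have ha2 : (δ / w) ^ 2 ≤ ‖p‖ ^ 2 :=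
    pow_le_pow_left₀ (le_of_lt (div_pos hδ hw0)) hres 2
  have he2 : ‖G - S' y‖ ^ 2 ≤ (σ / w) ^ 2 :=
    pow_le_pow_left₀ (norm_nonneg _) herr 2
  have hstep : η * (1 - η * (L + 1)) / 2 * (δ / w) ^ 2
      ≤ η * (1 - η * (L + 1)) / 2 * ‖p‖ ^ 2 := by
    apply mul_le_mul_of_nonneg_left ha2
    positivity
  have heq : ((1 - η * (L + 1)) * η * δ ^ 2 - σ ^ 2) / (2 * w ^ 2)
      = η * (1 - η * (L + 1)) / 2 * (δ / w) ^ 2 - (σ / w) ^ 2 / 2 := by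
    field_simp
  linarith [key, hstep, he2, heq]
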